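/- arXiv:1809.08938 — 2 statements merged into one kernel-verified Lean document; each statement's English description precedes it below -/
import Mathlib

section
/- Let N : ℤ^{≥0} × ℤ^{≥0} → ℚ satisfy N(1,0) = N(0,1) = 1, and set N₂(d) = Σ_{a+b=d, a,b ≥ 0} N(a,b). Let W : ℤ⁺ × ℤ^{≥0} → ℚ satisfy W(1,0) = W(1,1) = 1 together with recursion (I′) at every (d,l) with d ≥ 2 and 1 ≤ l ≤ 2d−1, and recursion (II′) at every (d,l) with d ≥ 2 and l ≥ 2. Then for every integer d ≥ 2: W(d,0) = (1/(2(d−1))) · Σ_{d₁,d₂ ≥ 1, d₁+d₂=d} ( d₁·C(4d−2, 4d₁−2) − (d₂+1)·C(4d−2, 4d₁−3) ) · W(d₁,0)·W(d₂+1,1). -/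
open Finset

/-- Binomial coefficient `C(n,k)` as a rational number, with the convention that
`C(n,k) = 0` whenever `k < 0` or `k > n`. -/
def binom (n k : ℤ) : ℚ :=
  if 0 ≤ k ∧ k ≤ n then (n.toNat.choose k.toNat : ℚ) else 0

/-- Pairs `(d₁, d₂)` of positive integers with `d₁ + d₂ = d`. -/
def pairsSum (d : ℕ) : Finset (ℕ × ℕ) :=
  (Finset.HasAntidiagonal.antidiagonal d).filter fun p => 1 ≤ p.1 ∧ 1 ≤ p.2

/-- `N₂(d) = ∑_{a+b=d, a,b ≥ 0} N(a,b)`. -/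
def Ntot (N : ℕ → ℕ → ℚ) (d : ℕ) : ℚ :=
  ∑ p ∈ Finset.HasAntidiagonal.antidiagonal d, N p.1 p.2

/-- The term `T₀(d,l) = −(−1)^d 2^{l−2} d² N₂(d)` if `l = 2d−1` and `0` otherwise;
the power `2^{l−2}` is taken in `ℚ`. -/
def T0tw (N : ℕ → ℕ → ℚ) (d l : ℕ) : ℚ :=
  if l + 1 = 2 * d then
    -((-1 : ℚ) ^ d * (2 : ℚ) ^ ((l : ℤ) - 2)) * (d : ℚ) ^ 2 * Ntot N d
  else 0

/-- Recursion (I′) for the Welschinger invariants of `(ℙ¹×ℙ¹, τ'₁,₁)`. -/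
def RecItw (N : ℕ → ℕ → ℚ) (W : ℕ → ℕ → ℚ) (d l : ℕ) : Prop :=
  W d l = T0tw N d l
    - ∑ p ∈ pairsSum d,
        (-1 : ℚ) ^ p.2 * (2 : ℚ) ^ (2 * p.2 - 2) * (p.1 : ℚ) * (p.2 : ℚ) ^ 3
          * binom ((l : ℤ) - 1) (2 * (p.2 : ℤ) - 1) * Ntot N p.2 * W p.1 (l - 2 * p.2)
    + 2 * ∑ q ∈ pairsSum d, ∑ r ∈ Finset.HasAntidiagonal.antidiagonal (l - 1),
        binom ((l : ℤ) - 1) (r.1 : ℤ)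
          * ((q.1 : ℚ) * (q.2 : ℚ)
                * binom (4 * (d : ℤ) - 2 * (l : ℤ) - 2) (4 * (q.1 : ℤ) - 2 * (r.1 : ℤ) - 2)
              - (q.1 : ℚ) ^ 2
                * binom (4 * (d : ℤ) - 2 * (l : ℤ) - 2) (4 * (q.1 : ℤ) - 2 * (r.1 : ℤ) - 1))
          * W q.1 r.1 * W q.2 r.2

/-- Recursion (II′) for the Welschinger invariants of `(ℙ¹×ℙ¹, τ'₁,₁)`. -/
def RecIItw (N : ℕ → ℕ → ℚ) (W : ℕ → ℕ → ℚ) (d l : ℕ) : Prop :=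
  W d l =
    ∑ p ∈ pairsSum d,
        (-1 : ℚ) ^ p.2 * (2 : ℚ) ^ (2 * p.2 - 2) * (p.1 : ℚ) * (p.2 : ℚ) ^ 2
          * ((p.1 : ℚ) * binom ((l : ℤ) - 2) (2 * (p.2 : ℤ) - 2)
              - (p.2 : ℚ) * binom ((l : ℤ) - 2) (2 * (p.2 : ℤ) - 1))
          * Ntot N p.2 * W p.1 (l - 2 * p.2)
    + 2 * ∑ q ∈ pairsSum d, ∑ r ∈ Finset.HasAntidiagonal.antidiagonal (l - 2),
        binom ((l : ℤ) - 2) (r.1 : ℤ)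
          * ((q.1 : ℚ) * (q.2 : ℚ)
                * binom (4 * (d : ℤ) - 2 * (l : ℤ) - 1) (4 * (q.1 : ℤ) - 2 * (r.1 : ℤ) - 2)
              - (q.1 : ℚ) ^ 2
                * binom (4 * (d : ℤ) - 2 * (l : ℤ) - 1) (4 * (q.1 : ℤ) - 2 * (r.1 : ℤ) - 1))
          * W q.1 r.1 * W q.2 (r.2 + 1)

/-- The formula for the purely real Welschinger invariant `W(d,0)` of
`(ℙ¹×ℙ¹, τ'₁,₁)`. -/
def Formulatw (W : ℕ → ℕ → ℚ) (d : ℕ) : Prop :=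
  W d 0 = (1 / (2 * ((d : ℚ) - 1))) *
    ∑ q ∈ pairsSum d,
      ((q.1 : ℚ) * binom (4 * (d : ℤ) - 2) (4 * (q.1 : ℤ) - 2)
        - ((q.2 : ℚ) + 1) * binom (4 * (d : ℤ) - 2) (4 * (q.1 : ℤ) - 3))
      * W q.1 0 * W (q.2 + 1) 1

/-! ### Auxiliary lemmas -/

lemma binom_natCast (m j : ℕ) : binom m j = (m.choose j : ℚ) := by
  unfold binom
  split
  · norm_num
  · next h =>
    have : m < j := by omega
    rw [Nat.choose_eq_zero_of_lt this]; norm_num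

lemma binom_neg {n k : ℤ} (hk : k < 0) : binom n k = 0 := by
  unfold binom; rw [if_neg]; omega

lemma binom_big {n k : ℤ} (hk : n < k) : binom n k = 0 := by
  unfold binom; rw [if_neg]; omega

lemma binom_pascal (m : ℕ) (k : ℤ) : binom (m + 1 : ℕ) k = binom m k + binom m (k - 1) := by
  rcases lt_or_ge k 0 with hk | hk
  · rw [binom_neg hk, binom_neg hk, binom_neg (by omega)]; ring
  · obtain ⟨j, rfl⟩ := Int.eq_ofNat_of_zero_le hk
    rcases j with _ | j'
    · rw [binom_natCast, binom_natCast, binom_neg (by norm_num)]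
      simp
    · have h1 : ((j' + 1 : ℕ) : ℤ) - 1 = (j' : ℕ) := by push_cast; ring
      rw [binom_natCast, binom_natCast, h1, binom_natCast, Nat.choose_succ_succ]
      push_cast; ring

lemma binom_symm (m : ℕ) (k : ℤ) (h0 : 0 ≤ k) (h1 : k ≤ m) :
    binom m k = binom m ((m : ℤ) - k) := by
  obtain ⟨j, rfl⟩ := Int.eq_ofNat_of_zero_le h0
  have hj : j ≤ m := by exact_mod_cast h1
  have h2 : (m : ℤ) - j = ((m - j : ℕ) : ℤ) := by omega
  rw [binom_natCast, h2, binom_natCast, Nat.choose_symm hj]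

lemma mem_pairsSum {d : ℕ} {q : ℕ × ℕ} :
    q ∈ pairsSum d ↔ q.1 + q.2 = d ∧ 1 ≤ q.1 ∧ 1 ≤ q.2 := by
  simp [pairsSum, Finset.HasAntidiagonal.mem_antidiagonal, and_assoc]

lemma sum_pairsSum (m : ℕ) (f : ℕ × ℕ → ℚ) :
    ∑ q ∈ pairsSum m, f q = ∑ i ∈ Finset.Ico 1 m, f (i, m - i) := by
  apply Finset.sum_nbij' (fun q => q.1) (fun i => (i, m - i))
  · intro q hq; rw [mem_pairsSum] at hq; simp only [Finset.mem_Ico]; omega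
  · intro i hi; simp only [Finset.mem_Ico] at hi; rw [mem_pairsSum]; simp; omega
  · intro q hq; rw [mem_pairsSum] at hq; ext <;> simp <;> omega
  · intro i _; rfl
  · intro q hq; rw [mem_pairsSum] at hq
    have h : (q.1, m - q.1) = q := by ext <;> simp <;> omega
    rw [h]

lemma sum_Ico_reflect (m : ℕ) (f : ℕ → ℚ) :
    ∑ i ∈ Finset.Ico 1 (m + 1), f i = ∑ i ∈ Finset.Ico 1 (m + 1), f (m + 1 - i) := by
  apply Finset.sum_nbij' (fun i => m + 1 - i) (fun i => m + 1 - i)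
  · intro i hi; simp only [Finset.mem_Ico] at *; omega
  · intro i hi; simp only [Finset.mem_Ico] at *; omega
  · intro i hi; simp only [Finset.mem_Ico] at hi; omega
  · intro i hi; simp only [Finset.mem_Ico] at hi; omega
  · intro i hi; simp only [Finset.mem_Ico] at hi; congr 1; omega

lemma antidiagonal_one_eq : Finset.HasAntidiagonal.antidiagonal (1 : ℕ) = {(0, 1), (1, 0)} := by decide

lemma b00 : binom 0 0 = 1 := by norm_num [binom]
lemma b01 : binom 0 1 = 0 := by norm_num [binom]
lemma b10 : binom 1 0 = 1 := by norm_num [binom]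
lemma b11 : binom 1 1 = 1 := by norm_num [binom]

/-- Abbreviation for `binom (4d-2) k`. -/
def bB (d : ℕ) (k : ℤ) : ℚ := binom (4 * (d : ℤ) - 2) k

def fA (W : ℕ → ℕ → ℚ) (d i : ℕ) : ℚ :=
  ((i : ℚ) * ((d + 1 - i : ℕ) : ℚ) * bB d (4 * (i : ℤ) - 2)
      - (i : ℚ) ^ 2 * bB d (4 * (i : ℤ) - 1)) * W i 0 * W (d + 1 - i) 1
  + ((i : ℚ) * ((d + 1 - i : ℕ) : ℚ) * bB d (4 * (i : ℤ) - 4)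
      - (i : ℚ) ^ 2 * bB d (4 * (i : ℤ) - 3)) * W i 1 * W (d + 1 - i) 0

def fC (W : ℕ → ℕ → ℚ) (d i : ℕ) : ℚ :=
  ((i : ℚ) * ((d + 1 - i : ℕ) : ℚ) * binom (4 * (d : ℤ) - 1) (4 * (i : ℤ) - 2)
      - (i : ℚ) ^ 2 * binom (4 * (d : ℤ) - 1) (4 * (i : ℤ) - 1)) * W i 0 * W (d + 1 - i) 1

def fP (W : ℕ → ℕ → ℚ) (d i : ℕ) : ℚ :=
  ((i : ℚ) * ((d + 1 - i : ℕ) : ℚ) * bB d (4 * (i : ℤ) - 3)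
      - (i : ℚ) ^ 2 * bB d (4 * (i : ℤ) - 2)) * W i 0 * W (d + 1 - i) 1

def fQ (W : ℕ → ℕ → ℚ) (d i : ℕ) : ℚ :=
  ((i : ℚ) * ((d + 1 - i : ℕ) : ℚ) * bB d (4 * (i : ℤ) - 4)
      - (i : ℚ) ^ 2 * bB d (4 * (i : ℤ) - 3)) * W i 1 * W (d + 1 - i) 0

def fQ2 (W : ℕ → ℕ → ℚ) (d i : ℕ) : ℚ :=
  ((i : ℚ) * ((d + 1 - i : ℕ) : ℚ) * bB d (4 * (i : ℤ) - 2)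
      - ((d + 1 - i : ℕ) : ℚ) ^ 2 * bB d (4 * (i : ℤ) - 3)) * W i 0 * W (d + 1 - i) 1

def fR (W : ℕ → ℕ → ℚ) (d i : ℕ) : ℚ :=
  (((d + 1 - i : ℕ) : ℚ) * bB d (4 * (i : ℤ) - 3)
      - (i : ℚ) * bB d (4 * (i : ℤ) - 2)) * W i 0 * W (d + 1 - i) 1

/-- The WDVV-type relations for `(ℙ¹×ℙ¹, τ'₁,₁)` imply the formula for the
purely real invariants `W(d,0)` for all `d ≥ 2`. -/
theorem stmt_7 (N : ℕ → ℕ → ℚ) (W : ℕ → ℕ → ℚ)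
    (hN10 : N 1 0 = 1) (hN01 : N 0 1 = 1)
    (hW10 : W 1 0 = 1) (hW11 : W 1 1 = 1)
    (hI : ∀ d l : ℕ, 2 ≤ d → 1 ≤ l → l + 1 ≤ 2 * d → RecItw N W d l)
    (hII : ∀ d l : ℕ, 2 ≤ d → 2 ≤ l → RecIItw N W d l) :
    ∀ d : ℕ, 2 ≤ d → Formulatw W d := by
  intro d hd
  have hI2 := hI (d + 1) 2 (by omega) (by norm_num) (by omega)
  have hII2 := hII (d + 1) 2 (by omega) (by norm_num)
  unfold RecItw at hI2
  unfold RecIItw at hII2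
  norm_num at hI2 hII2
  -- N₂(1) = 2
  have hNt : Ntot N 1 = 2 := by
    unfold Ntot
    rw [antidiagonal_one_eq, Finset.sum_pair (by decide)]
    rw [hN01, hN10]; norm_num
  -- T₀ vanishes
  have hT0 : T0tw N (d + 1) 2 = 0 := by
    unfold T0tw; rw [if_neg]; omega
  -- evaluate the first (single) sum of (I')
  have hS1 : ∑ x ∈ pairsSum (d + 1),
      (-1 : ℚ) ^ x.2 * (2 : ℚ) ^ (2 * x.2 - 2) * (x.1 : ℚ) * (x.2 : ℚ) ^ 3
        * binom 1 (2 * (x.2 : ℤ) - 1) * Ntot N x.2 * W x.1 (2 - 2 * x.2)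
      = -(2 * (d : ℚ) * W d 0) := by
    rw [Finset.sum_eq_single_of_mem ((d, 1) : ℕ × ℕ)]
    · norm_num [b11, hNt]
      try ring
      try exact Or.inl trivial
    · rw [mem_pairsSum]; refine ⟨rfl, by omega, le_refl 1⟩
    · intro p hp hne
      rw [mem_pairsSum] at hp
      have h2 : 2 ≤ p.2 := by
        rcases Nat.lt_or_ge p.2 2 with h | h
        · exfalso; apply hne
          have e2 : p.2 = 1 := by omega
          have e1 : p.1 = d := by omega
          exact Prod.ext e1 e2
        · exact h
      have h2' : (2 : ℤ) ≤ (p.2 : ℤ) := by exact_mod_cast h2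
      rw [binom_big (by omega : (1 : ℤ) < 2 * (p.2 : ℤ) - 1)]
      ring
  -- evaluate the first (single) sum of (II')
  have hS3 : ∑ x ∈ pairsSum (d + 1),
      (-1 : ℚ) ^ x.2 * (2 : ℚ) ^ (2 * x.2 - 2) * (x.1 : ℚ) * (x.2 : ℚ) ^ 2
        * ((x.1 : ℚ) * binom 0 (2 * (x.2 : ℤ) - 2) - (x.2 : ℚ) * binom 0 (2 * (x.2 : ℤ) - 1))
        * Ntot N x.2 * W x.1 (2 - 2 * x.2)
      = -(2 * (d : ℚ) ^ 2 * W d 0) := by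
    rw [Finset.sum_eq_single_of_mem ((d, 1) : ℕ × ℕ)]
    · norm_num [b00, b01, hNt]
      try ring
      try exact Or.inl trivial
    · rw [mem_pairsSum]; refine ⟨rfl, by omega, le_refl 1⟩
    · intro p hp hne
      rw [mem_pairsSum] at hp
      have h2 : 2 ≤ p.2 := by
        rcases Nat.lt_or_ge p.2 2 with h | h
        · exfalso; apply hne
          have e2 : p.2 = 1 := by omega
          have e1 : p.1 = d := by omega
          exact Prod.ext e1 e2
        · exact h
      have h2' : (2 : ℤ) ≤ (p.2 : ℤ) := by exact_mod_cast h2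
      rw [binom_big (by omega : (0 : ℤ) < 2 * (p.2 : ℤ) - 2),
        binom_big (by omega : (0 : ℤ) < 2 * (p.2 : ℤ) - 1)]
      ring
  -- evaluate the double sum of (I')
  have hA : (∑ q ∈ pairsSum (d + 1), ∑ r ∈ Finset.HasAntidiagonal.antidiagonal (1 : ℕ),
      binom 1 ((r.1 : ℕ) : ℤ)
        * ((q.1 : ℚ) * (q.2 : ℚ) * binom (4 * ((d : ℤ) + 1) - 4 - 2) (4 * (q.1 : ℤ) - 2 * ((r.1 : ℕ) : ℤ) - 2)
          - (q.1 : ℚ) ^ 2 * binom (4 * ((d : ℤ) + 1) - 4 - 2) (4 * (q.1 : ℤ) - 2 * ((r.1 : ℕ) : ℤ) - 1))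
        * W q.1 r.1 * W q.2 r.2)
      = ∑ i ∈ Finset.Ico 1 (d + 1), fA W d i := by
    rw [sum_pairsSum]
    apply Finset.sum_congr rfl
    intro i hi
    dsimp only
    rw [antidiagonal_one_eq, Finset.sum_pair (by decide)]
    have e : 4 * ((d : ℤ) + 1) - 4 - 2 = 4 * (d : ℤ) - 2 := by ring
    rw [e]
    unfold fA bB
    norm_num [b10, b11]
    try ring_nf
    try simp
  -- evaluate the double sum of (II')
  have hC : (∑ q ∈ pairsSum (d + 1),
      binom 0 0
        * ((q.1 : ℚ) * (q.2 : ℚ) * binom (4 * ((d : ℤ) + 1) - 4 - 1) (4 * (q.1 : ℤ) - 2)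
          - (q.1 : ℚ) ^ 2 * binom (4 * ((d : ℤ) + 1) - 4 - 1) (4 * (q.1 : ℤ) - 1))
        * W q.1 0 * W q.2 1)
      = ∑ i ∈ Finset.Ico 1 (d + 1), fC W d i := by
    rw [sum_pairsSum]
    apply Finset.sum_congr rfl
    intro i hi
    dsimp only
    have e : 4 * ((d : ℤ) + 1) - 4 - 1 = 4 * (d : ℤ) - 1 := by ring
    rw [e]
    unfold fC
    norm_num [b00]
    try ring_nf
    try simp
  rw [hT0, hS1, hA] at hI2
  rw [hS3, hC] at hII2
  -- Pascal's rule for the top `4d - 1`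
  have pas : ∀ k : ℤ, binom (4 * (d : ℤ) - 1) k
      = binom (4 * (d : ℤ) - 2) k + binom (4 * (d : ℤ) - 2) (k - 1) := by
    intro k
    have e1 : 4 * (d : ℤ) - 1 = ((4 * d - 2 + 1 : ℕ) : ℤ) := by omega
    have e2 : 4 * (d : ℤ) - 2 = ((4 * d - 2 : ℕ) : ℤ) := by omega
    rw [e1, e2, binom_pascal]
  -- split fC into fA + fP - fQ using Pascal
  have hsplit : ∑ i ∈ Finset.Ico 1 (d + 1), fC W d i
      = (∑ i ∈ Finset.Ico 1 (d + 1), fA W d i)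
        + ((∑ i ∈ Finset.Ico 1 (d + 1), fP W d i) - ∑ i ∈ Finset.Ico 1 (d + 1), fQ W d i) := by
    rw [← Finset.sum_sub_distrib, ← Finset.sum_add_distrib]
    apply Finset.sum_congr rfl
    intro i hi
    unfold fC fA fP fQ bB
    rw [pas (4 * (i : ℤ) - 2), pas (4 * (i : ℤ) - 1)]
    have e3 : 4 * (i : ℤ) - 2 - 1 = 4 * (i : ℤ) - 3 := by ring
    have e4 : 4 * (i : ℤ) - 1 - 1 = 4 * (i : ℤ) - 2 := by ring
    rw [e3, e4]
    ring
  -- reflection of the fQ sum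
  have hrefl : ∑ i ∈ Finset.Ico 1 (d + 1), fQ W d i
      = ∑ i ∈ Finset.Ico 1 (d + 1), fQ2 W d i := by
    rw [sum_Ico_reflect]
    apply Finset.sum_congr rfl
    intro i hi
    simp only [Finset.mem_Ico] at hi
    unfold fQ fQ2 bB
    have e5 : d + 1 - (d + 1 - i) = i := by omega
    rw [e5]
    have hb1 : binom (4 * (d : ℤ) - 2) (4 * ((d + 1 - i : ℕ) : ℤ) - 4)
        = binom (4 * (d : ℤ) - 2) (4 * (i : ℤ) - 2) := by
      have e : 4 * ((d + 1 - i : ℕ) : ℤ) - 4 = 4 * (d : ℤ) - 4 * (i : ℤ) := by omega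
      have e2 : 4 * (d : ℤ) - 2 = ((4 * d - 2 : ℕ) : ℤ) := by omega
      rw [e, e2, binom_symm _ _ (by omega) (by omega)]
      congr 1
      omega
    have hb2 : binom (4 * (d : ℤ) - 2) (4 * ((d + 1 - i : ℕ) : ℤ) - 3)
        = binom (4 * (d : ℤ) - 2) (4 * (i : ℤ) - 3) := by
      have e : 4 * ((d + 1 - i : ℕ) : ℤ) - 3 = 4 * (d : ℤ) - 4 * (i : ℤ) + 1 := by omega
      have e2 : 4 * (d : ℤ) - 2 = ((4 * d - 2 : ℕ) : ℤ) := by omega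
      rw [e, e2, binom_symm _ _ (by omega) (by omega)]
      congr 1
      omega
    rw [hb1, hb2]
    ring
  -- combine fP - fQ2 into (d+1) * fR
  have hPQ : (∑ i ∈ Finset.Ico 1 (d + 1), fP W d i) - ∑ i ∈ Finset.Ico 1 (d + 1), fQ2 W d i
      = ((d : ℚ) + 1) * ∑ i ∈ Finset.Ico 1 (d + 1), fR W d i := by
    rw [Finset.mul_sum, ← Finset.sum_sub_distrib]
    apply Finset.sum_congr rfl
    intro i hi
    simp only [Finset.mem_Ico] at hi
    unfold fP fQ2 fR
    have hle : i ≤ d + 1 := by omega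
    have ec : ((d + 1 - i : ℕ) : ℚ) = (d : ℚ) + 1 - (i : ℚ) := by
      push_cast [hle]
      ring
    rw [ec]
    ring
  -- split off the top term i = d
  have hsplit2 : ∑ i ∈ Finset.Ico 1 (d + 1), fR W d i
      = (∑ i ∈ Finset.Ico 1 d, fR W d i) + fR W d d :=
    Finset.sum_Ico_succ_top (by omega) _
  -- value of the top term
  have hRd : fR W d d = (3 * (d : ℚ) - 2) * W d 0 := by
    unfold fR bB
    have e : d + 1 - d = 1 := by omega
    rw [e]
    have e2 : 4 * (d : ℤ) - 2 = ((4 * d - 2 : ℕ) : ℤ) := by omega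
    have e3 : 4 * (d : ℤ) - 3 = ((4 * d - 3 : ℕ) : ℤ) := by omega
    have hb3 : binom (4 * (d : ℤ) - 2) (4 * (d : ℤ) - 3) = 4 * (d : ℚ) - 2 := by
      rw [e2, e3, binom_natCast]
      rw [← Nat.choose_symm (show 4 * d - 3 ≤ 4 * d - 2 by omega),
        show 4 * d - 2 - (4 * d - 3) = 1 from by omega, Nat.choose_one_right]
      push_cast [show 2 ≤ 4 * d from by omega]
      ring
    have hb4 : binom (4 * (d : ℤ) - 2) (4 * (d : ℤ) - 2) = 1 := by
      rw [e2, binom_natCast, Nat.choose_self]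
      norm_num
    rw [hb3, hb4, hW11]
    push_cast
    ring
  -- the key identity
  have key : (d : ℚ) * ((d : ℚ) + 1) * W d 0
      = (∑ i ∈ Finset.Ico 1 (d + 1), fC W d i) - ∑ i ∈ Finset.Ico 1 (d + 1), fA W d i := by
    linear_combination (hII2 - hI2) / 2
  have hne : ((d : ℚ) + 1) ≠ 0 := by positivity
  have key2 : (d : ℚ) * W d 0 = (3 * (d : ℚ) - 2) * W d 0 + ∑ i ∈ Finset.Ico 1 d, fR W d i := by
    apply mul_left_cancel₀ hne
    linear_combination key + hsplit - hrefl + hPQ + ((d : ℚ) + 1) * hsplit2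
      + ((d : ℚ) + 1) * hRd
  -- now prove the formula
  unfold Formulatw
  rw [sum_pairsSum]
  have htgt : ∑ i ∈ Finset.Ico 1 d,
      (((i : ℚ) * binom (4 * (d : ℤ) - 2) (4 * (i : ℤ) - 2)
        - (((d - i : ℕ) : ℚ) + 1) * binom (4 * (d : ℤ) - 2) (4 * (i : ℤ) - 3))
        * W i 0 * W (d - i + 1) 1)
      = -∑ i ∈ Finset.Ico 1 d, fR W d i := by
    rw [← Finset.sum_neg_distrib]
    apply Finset.sum_congr rfl
    intro i hi
    simp only [Finset.mem_Ico] at hi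
    unfold fR bB
    have e8 : d - i + 1 = d + 1 - i := by omega
    rw [e8]
    have e9 : ((d - i : ℕ) : ℚ) + 1 = ((d + 1 - i : ℕ) : ℚ) := by
      push_cast [show i ≤ d from by omega, show i ≤ d + 1 from by omega]
      ring
    rw [e9]
    ring
  have hfin : ∑ i ∈ Finset.Ico 1 d, fR W d i = -(2 * ((d : ℚ) - 1) * W d 0) := by
    linear_combination -key2
  have hne2 : (d : ℚ) - 1 ≠ 0 := by
    have : (2 : ℚ) ≤ (d : ℚ) := by exact_mod_cast hd
    intro h
    nlinarith
  rw [htgt, hfin]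
  field_simp
end

section
/- Let C assign a rational number C(m; d) to each pair of a finite tuple m of elements of (ℤ^{≥0})³∖{0} and a nonzero d ∈ (ℤ^{≥0})³, with C(m; d) = 0 whenever |m₁|+⋯+|m_l| ≠ 2|d| + l (dimension vanishing). Suppose F, assigning a rational number F(m; d) to each pair of a (possibly empty) finite tuple m of elements of (ℤ^{≥0})³∖{0} and a nonzero d ∈ (ℤ^{≥0})³, satisfies: the divisor relation F((e_s)⌢m; d) = d_s·F(m; d) for s = 1,2,3; F(m; d) = 0 whenever some entry mᵢ of m has a coordinate ≥ 2; F((); e_s) = 1 for s = 1,2,3; and recursion (A) with complex input C at all admissible (r,d,m). Then for every r ∈ {1,2,3} and every d ∈ (ℤ^{≥0})³ with d ∉ {0, e_r}: (|d| − 1 − 2d_r)·F((); d) = Σ_{d′,d″ ∈ (ℤ^{≥0})³, |d′| ≥ 2, |d″| ≥ 2, d′+d″ = d+e_r} d′_r ( d″_r·C(|d|−1, |d′|−1) − d′_r·C(|d|−1, |d′|) )·F((); d′)·F((); d″). -/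
open Finset

/-- Elements of `(ℤ^{≥0})³`. -/
abbrev V3 := Fin 3 → ℕ

/-- `|d| = d₁ + d₂ + d₃`. -/
def nrm (v : V3) : ℕ := ∑ i, v i

/-- The vector `𝟏 = (1,1,1)`. -/
def oneV : V3 := fun _ => 1

/-- All entries of the tuple `m` lie in `(ℤ^{≥0})³ ∖ {0}`. -/
def posV (m : List V3) : Prop := ∀ v ∈ m, v ≠ 0

/-- For `d ∈ (ℤ^{≥0})³` and a tuple `m = (m₁,…,m_l)` of elements of `(ℤ^{≥0})³`,
the number `k_d(m) = |d| + l − (|m₁| + ⋯ + |m_l|)`. -/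
def kd3 (d : V3) (m : List V3) : ℤ :=
  (nrm d : ℤ) + m.length - ((m.map nrm).sum : ℤ)

/-- The subtuple of a tuple `m` indexed (in increasing order) by a set `S`
of positions. -/
def subt {α : Type*} (m : List α) (S : Finset (Fin m.length)) : List α :=
  (S.sort (· ≤ ·)).map m.get

/-- Vectors `d'` with `d'' + 2d' = d` for some `d''`, `d' ≠ 0`, `d'' ≠ 0`. -/
def halfVec (d : V3) : Finset V3 :=
  (Fintype.piFinset fun i => Finset.range (d i + 1)).filter
    fun d' => (∀ i, 2 * d' i ≤ d i) ∧ d' ≠ 0 ∧ (fun i => d i - 2 * d' i) ≠ (0 : V3)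

/-- Vectors `d'` with `d' + d'' = d` for some `d''`, `d' ≠ 0`, `d'' ≠ 0`. -/
def splitVec (d : V3) : Finset V3 :=
  (Fintype.piFinset fun i => Finset.range (d i + 1)).filter
    fun d' => d' ≠ 0 ∧ (fun i => d i - d' i) ≠ (0 : V3)

/-- The nonzero vectors `i ∈ (ℤ^{≥0})³` with `𝟏 − i` nonzero. -/
def unitsV : Finset V3 :=
  (Fintype.piFinset fun _ => Finset.range 2).filter
    fun i => i ≠ 0 ∧ i ≠ oneV

/-- The term `T₀ = −2^{l−2} d_r C(m⌢(𝟏); d/2)` if all three coordinates of `d`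
are even and `k_d(m) = 2`, and `0` otherwise; the power `2^{l−2}` is taken
in `ℚ`. -/
def TA (C : List V3 → V3 → ℚ) (d : V3) (r : Fin 3) (m : List V3) : ℚ :=
  if (∀ i, Even (d i)) ∧ kd3 d m = 2 then
    -((2 : ℚ) ^ ((m.length : ℤ) - 2)) * (d r : ℚ) * C (m ++ [oneV]) (fun i => d i / 2)
  else 0

/-- The WDVV-type recursion (A) for the real invariants of `((ℙ¹)³, φ₃)` at
`(r, d, m)` with `m = x :: t`: the sums over `(I,J) ∈ P(l)` are encoded by the
subsets `S` of the positions of `t` placed in `I` (so `m_I = x :: t_S`,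
`m_J = t_{Sᶜ}` and `|I| = |S| + 1`). -/
def RecA (C F : List V3 → V3 → ℚ) (r : Fin 3) (d : V3) (x : V3) (t : List V3) : Prop :=
  F ((x + Pi.single r 1) :: t) d =
    TA C d r (x :: t)
    - ∑ d' ∈ halfVec d, (d' r : ℚ) *
        ∑ S : Finset (Fin t.length), (2 : ℚ) ^ S.card *
          ∑ i ∈ unitsV,
            C ((x :: subt t S) ++ [i]) d'
              * F ((fun s => 1 - i s) :: subt t Sᶜ) (fun s => d s - 2 * d' s)
    + ∑ d' ∈ splitVec d,
        ∑ S : Finset (Fin t.length),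
          (((d r - d' r : ℕ) : ℚ) * binom (kd3 d (x :: t) - 2) (kd3 d' (x :: subt t S) - 1)
            - (d' r : ℚ) * binom (kd3 d (x :: t) - 2) (kd3 d' (x :: subt t S)))
          * F (x :: subt t S) d' * F (subt t Sᶜ) (fun s => d s - d' s)
section Lemmas

lemma nrm_pos {v : V3} (h : v ≠ 0) : 1 ≤ nrm v := by
  rcases Nat.eq_zero_or_pos (nrm v) with h0 | h1
  · exfalso; apply h; funext i
    have := (Finset.sum_eq_zero_iff.mp h0) i (Finset.mem_univ i)
    simpa using this
  · exact h1

lemma nrm_single (r : Fin 3) : nrm (Pi.single r 1) = 1 := by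
  simp [nrm]

lemma single_ne_zero' (r : Fin 3) : (Pi.single r 1 : V3) ≠ 0 := by
  intro h
  have := congrFun h r
  simp at this

lemma nrm_one_eq {v : V3} {r : Fin 3} (h1 : nrm v = 1) (hr : 1 ≤ v r) :
    v = Pi.single r 1 := by
  have hle : ∀ i, v i ≤ 1 := by
    intro i
    calc v i ≤ nrm v := Finset.single_le_sum (f := v) (fun j _ => Nat.zero_le _) (Finset.mem_univ i)
    _ = 1 := h1
  have hvr : v r = 1 := le_antisymm (hle r) hr
  funext i
  by_cases hi : i = r
  · subst hi; simpa using hvr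
  · simp [Pi.single_apply, hi]
    -- need v i = 0
    by_contra hne
    have h1' : 1 ≤ v i := Nat.one_le_iff_ne_zero.mpr hne
    have : 2 ≤ nrm v := by
      have := Finset.add_sum_erase Finset.univ v (Finset.mem_univ r)
      have hm : i ∈ Finset.univ.erase r := Finset.mem_erase.mpr ⟨hi, Finset.mem_univ i⟩
      have h2 : v i ≤ ∑ j ∈ Finset.univ.erase r, v j :=
        Finset.single_le_sum (fun j _ => Nat.zero_le _) hm
      have hs : nrm v = v r + ∑ x ∈ Finset.univ.erase r, v x := by
        rw [nrm, ← this]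
      omega
    omega

lemma binom_zero {n : ℤ} (h : 0 ≤ n) : binom n 0 = 1 := by
  simp [binom, h]

lemma binom_one {n : ℤ} (h : 0 ≤ n) : binom n 1 = (n : ℚ) := by
  rcases lt_or_ge n 1 with h1 | h1
  · interval_cases n
    · simp [binom]
  · unfold binom
    rw [if_pos ⟨by norm_num, h1⟩]
    show ((n.toNat.choose (Int.toNat 1) : ℕ) : ℚ) = n
    rw [show Int.toNat 1 = 1 from rfl, Nat.choose_one_right]
    exact_mod_cast congrArg (Int.cast : ℤ → ℚ) (Int.toNat_of_nonneg h)

lemma binom_self {n : ℤ} (h : 0 ≤ n) : binom n n = 1 := by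
  unfold binom
  rw [if_pos ⟨h, le_refl n⟩, Nat.choose_self]
  norm_num

lemma binom_gt {n k : ℤ} (h : n < k) : binom n k = 0 := by
  unfold binom
  rw [if_neg]; omega

end Lemmas
section Lemmas2

instance : IsEmpty (Fin (List.length ([] : List V3))) := inferInstanceAs (IsEmpty (Fin 0))

lemma subt_nil (S : Finset (Fin (List.length ([] : List V3)))) : subt [] S = [] := by
  rw [subt, Finset.eq_empty_of_isEmpty S]
  simp

lemma sum_finset_fin0 {M : Type*} [AddCommMonoid M]
    (f : Finset (Fin (List.length ([] : List V3))) → M) :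
    ∑ S : Finset (Fin (List.length ([] : List V3))), f S = f ∅ := by
  apply Finset.sum_eq_single_of_mem ∅ (Finset.mem_univ _)
  intro b _ hb
  exact absurd (Finset.eq_empty_of_isEmpty b) hb

end Lemmas2

lemma nrm_add (a b : V3) : nrm (a + b) = nrm a + nrm b := by
  simp [nrm, Finset.sum_add_distrib]
/-- The WDVV-type relation (A) for `((ℙ¹)³, φ₃)` implies the quadratic relation
determining the purely real point-counting invariants `F([]; d)`. -/
theorem stmt_17 (C F : List V3 → V3 → ℚ)
    (hC : ∀ d : V3, d ≠ 0 → ∀ m : List V3, posV m →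
      (m.map nrm).sum ≠ 2 * nrm d + m.length → C m d = 0)
    (hdiv : ∀ s : Fin 3, ∀ d : V3, d ≠ 0 → ∀ m : List V3, posV m →
      F (Pi.single s 1 :: m) d = (d s : ℚ) * F m d)
    (hbig : ∀ d : V3, d ≠ 0 → ∀ m : List V3, posV m →
      (∃ v ∈ m, ∃ i : Fin 3, 2 ≤ v i) → F m d = 0)
    (hbase : ∀ s : Fin 3, F [] (Pi.single s 1) = 1)
    (hA : ∀ (r : Fin 3) (d : V3) (x : V3) (t : List V3), d ≠ 0 → posV (x :: t) →
      2 ≤ kd3 d (x :: t) → RecA C F r d x t) :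
    ∀ (r : Fin 3) (d : V3), d ≠ 0 → d ≠ Pi.single r 1 →
      ((nrm d : ℚ) - 1 - 2 * (d r : ℚ)) * F [] d =
        ∑ d' ∈ (Fintype.piFinset fun i => Finset.range (((d + Pi.single r 1 : V3) i + 1))).filter
            (fun d' => 2 ≤ nrm d' ∧ 2 ≤ nrm (fun i => (d + Pi.single r 1 : V3) i - d' i)),
          (d' r : ℚ)
            * ((((d + Pi.single r 1 : V3) r - d' r : ℕ) : ℚ)
                  * binom ((nrm d : ℤ) - 1) ((nrm d' : ℤ) - 1)
                - (d' r : ℚ) * binom ((nrm d : ℤ) - 1) (nrm d' : ℤ))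
            * F [] d' * F [] (fun i => (d + Pi.single r 1 : V3) i - d' i) := by
  intro r d hd0 hdr
  set D : V3 := d + Pi.single r 1 with hDdef
  have hDi : ∀ i, D i = d i + (Pi.single r 1 : V3) i := fun i => rfl
  have hnd : 1 ≤ nrm d := nrm_pos hd0
  have hDr : D r = d r + 1 := by rw [hDi r, Pi.single_eq_same]
  have hD0 : D ≠ 0 := by
    intro h
    have := congrFun h r
    rw [hDr] at this
    simp at this
  have hnrmD : nrm D = nrm d + 1 := by
    rw [hDdef, nrm_add, nrm_single]
  have hpos1 : posV [Pi.single r 1] := by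
    intro v hv
    simp only [List.mem_singleton] at hv
    subst hv
    exact single_ne_zero' r
  have hkd : kd3 D (Pi.single r 1 :: []) = (nrm D : ℤ) := by
    simp [kd3, nrm_single]
  have hrec := hA r D (Pi.single r 1) [] hD0 hpos1 (by rw [hkd]; exact_mod_cast by omega)
  rw [RecA] at hrec
  -- LHS vanishes
  have hL : F ((Pi.single r 1 + Pi.single r 1) :: []) D = 0 := by
    refine hbig D hD0 _ ?_ ⟨_, List.mem_cons_self, r, ?_⟩
    · intro v hv
      simp only [List.mem_singleton] at hv
      subst hv
      intro h
      have := congrFun h r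
      simp at this
    · simp
  -- TA vanishes
  have hTA : TA C D r (Pi.single r 1 :: []) = 0 := by
    rw [TA, if_neg]
    rintro ⟨hev, hk⟩
    rw [hkd] at hk
    have h2 : nrm d = 1 := by
      have : nrm D = 2 := by exact_mod_cast hk
      omega
    have hle : D r ≤ nrm D :=
      Finset.single_le_sum (f := D) (fun j _ => Nat.zero_le _) (Finset.mem_univ r)
    obtain ⟨k, hkk⟩ := hev r
    have hdr1 : 1 ≤ d r := by omega
    exact hdr (nrm_one_eq h2 hdr1)
  -- the halfVec sum vanishes
  have hHalf : (∑ d' ∈ halfVec D, (d' r : ℚ) *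
        ∑ S : Finset (Fin ([] : List V3).length), (2 : ℚ) ^ S.card *
          ∑ i ∈ unitsV,
            C ((Pi.single r 1 :: subt ([] : List V3) S) ++ [i]) d'
              * F ((fun s => 1 - i s) :: subt ([] : List V3) Sᶜ) (fun s => D s - 2 * d' s)) = 0 := by
    apply Finset.sum_eq_zero
    intro d' hd'
    rw [halfVec, Finset.mem_filter] at hd'
    obtain ⟨-, -, hd'0, -⟩ := hd'
    have h1 : 1 ≤ nrm d' := nrm_pos hd'0
    apply mul_eq_zero_of_right
    apply Finset.sum_eq_zero
    intro S _
    apply mul_eq_zero_of_right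
    apply Finset.sum_eq_zero
    intro i hi
    rw [unitsV, Finset.mem_filter, Fintype.mem_piFinset] at hi
    obtain ⟨hle, hi0, hi1⟩ := hi
    have hle' : ∀ s, i s ≤ 1 := by
      intro s
      have := hle s
      rw [Finset.mem_range] at this
      omega
    have hiub : nrm i ≤ 2 := by
      by_contra hgt
      push_neg at hgt
      apply hi1
      have hsum : i 0 + i 1 + i 2 = nrm i := (Fin.sum_univ_three i).symm
      have h0 := hle' 0
      have h1 := hle' 1
      have h2 := hle' 2
      have h0' : i 0 = 1 := by omega
      have h1' : i 1 = 1 := by omega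
      have h2' : i 2 = 1 := by omega
      funext s
      fin_cases s
      · exact h0'
      · exact h1'
      · exact h2'
    apply mul_eq_zero_of_left
    rw [subt_nil]
    apply hC d' hd'0
    · intro v hv
      simp only [List.cons_append, List.nil_append, List.mem_cons, List.mem_singleton] at hv
      rcases hv with h | h
      · subst h; exact single_ne_zero' r
      · rcases h with h | h
        · subst h; exact hi0
        · simp at h
    · simp only [List.cons_append, List.nil_append, List.map_cons, List.map_nil,
        List.sum_cons, List.sum_nil, List.length_cons, List.length_nil, nrm_single]
      omega
  rw [hL, hTA, hHalf, sub_zero, zero_add] at hrec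
  -- rewrite the splitVec sum
  have hkey : (0 : ℚ) = ∑ d' ∈ splitVec D,
      (d' r : ℚ)
        * (((D r - d' r : ℕ) : ℚ) * binom ((nrm d : ℤ) - 1) ((nrm d' : ℤ) - 1)
            - (d' r : ℚ) * binom ((nrm d : ℤ) - 1) (nrm d' : ℤ))
        * F [] d' * F [] (fun i => D i - d' i) := by
    rw [hrec]
    apply Finset.sum_congr rfl
    intro d' hd'
    rw [splitVec, Finset.mem_filter] at hd'
    obtain ⟨-, hd'0, -⟩ := hd'
    rw [sum_finset_fin0]
    rw [subt_nil, subt_nil]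
    rw [hdiv r d' hd'0 [] (by intro v hv; simp at hv)]
    have e1 : kd3 D (Pi.single r 1 :: ([] : List V3)) - 2 = (nrm d : ℤ) - 1 := by
      rw [hkd, hnrmD]; push_cast; ring
    have e2 : kd3 d' (Pi.single r 1 :: ([] : List V3)) = (nrm d' : ℤ) := by
      simp [kd3, nrm_single]
    rw [e1, e2]
    ring
  -- pull out the two boundary terms d' = e_r and d' = d
  have hdiff1 : (fun i => D i - (Pi.single r 1 : V3) i) = d := funext fun i => by
    have := hDi i; omega
  have hdiff2 : (fun i => D i - d i) = (Pi.single r 1 : V3) := funext fun i => by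
    have := hDi i; omega
  have hmem1 : (Pi.single r 1 : V3) ∈ splitVec D := by
    rw [splitVec, Finset.mem_filter, Fintype.mem_piFinset]
    refine ⟨fun i => ?_, single_ne_zero' r, ?_⟩
    · rw [Finset.mem_range]
      have := hDi i; omega
    · rw [hdiff1]; exact hd0
  have hmem2 : d ∈ splitVec D := by
    rw [splitVec, Finset.mem_filter, Fintype.mem_piFinset]
    refine ⟨fun i => ?_, hd0, ?_⟩
    · rw [Finset.mem_range]
      have := hDi i; omega
    · rw [hdiff2]; exact single_ne_zero' r
  rw [← Finset.insert_erase hmem1, Finset.sum_insert (Finset.notMem_erase _ _)] at hkey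
  have hmem2' : d ∈ (splitVec D).erase (Pi.single r 1) :=
    Finset.mem_erase.mpr ⟨hdr, hmem2⟩
  rw [← Finset.insert_erase hmem2', Finset.sum_insert (Finset.notMem_erase _ _)] at hkey
  -- evaluate the term at e_r
  have hnd' : (0 : ℤ) ≤ (nrm d : ℤ) - 1 := by exact_mod_cast by omega
  have hge : (((Pi.single r 1 : V3) r : ℚ)
        * (((D r - (Pi.single r 1 : V3) r : ℕ) : ℚ) * binom ((nrm d : ℤ) - 1) ((nrm (Pi.single r 1) : ℤ) - 1)
            - ((Pi.single r 1 : V3) r : ℚ) * binom ((nrm d : ℤ) - 1) (nrm (Pi.single r 1) : ℤ))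
        * F [] (Pi.single r 1) * F [] (fun i => D i - (Pi.single r 1 : V3) i))
      = ((d r : ℚ) - ((nrm d : ℚ) - 1)) * F [] d := by
    rw [hdiff1, hbase r, nrm_single, Pi.single_eq_same]
    have e3 : D r - 1 = d r := by omega
    rw [e3]
    have e4 : ((1 : ℕ) : ℤ) - 1 = 0 := by norm_num
    rw [e4, binom_zero hnd', show ((1 : ℕ) : ℤ) = 1 from Nat.cast_one, binom_one hnd']
    push_cast
    ring
  -- evaluate the term at d
  have hgd : ((d r : ℚ)
        * (((D r - d r : ℕ) : ℚ) * binom ((nrm d : ℤ) - 1) ((nrm d : ℤ) - 1)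
            - (d r : ℚ) * binom ((nrm d : ℤ) - 1) (nrm d : ℤ))
        * F [] d * F [] (fun i => D i - d i))
      = (d r : ℚ) * F [] d := by
    rw [hdiff2, hbase r]
    have e3 : D r - d r = 1 := by omega
    rw [e3, binom_self hnd', binom_gt (by omega : (nrm d : ℤ) - 1 < (nrm d : ℤ))]
    push_cast
    ring
  rw [hge, hgd] at hkey
  -- identify the remaining sum with the target sum
  have hr0 : ∀ v : V3, nrm v = 1 → v ≠ Pi.single r 1 → v r = 0 := by
    intro v h1 hne
    by_contra h
    exact hne (nrm_one_eq h1 (by omega))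
  have hnrm_split : ∀ d' : V3, (∀ i, d' i ≤ D i) →
      nrm d' + nrm (fun i => D i - d' i) = nrm D := by
    intro d' hle
    rw [nrm, nrm, nrm, ← Finset.sum_add_distrib]
    exact Finset.sum_congr rfl fun i _ => by have := hle i; omega
  have hrest : ∑ d' ∈ ((Fintype.piFinset fun i => Finset.range (D i + 1)).filter
          (fun d' => 2 ≤ nrm d' ∧ 2 ≤ nrm (fun i => D i - d' i))),
        (d' r : ℚ)
          * (((D r - d' r : ℕ) : ℚ) * binom ((nrm d : ℤ) - 1) ((nrm d' : ℤ) - 1)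
              - (d' r : ℚ) * binom ((nrm d : ℤ) - 1) (nrm d' : ℤ))
          * F [] d' * F [] (fun i => D i - d' i)
      = ∑ d' ∈ ((splitVec D).erase (Pi.single r 1)).erase d,
        (d' r : ℚ)
          * (((D r - d' r : ℕ) : ℚ) * binom ((nrm d : ℤ) - 1) ((nrm d' : ℤ) - 1)
              - (d' r : ℚ) * binom ((nrm d : ℤ) - 1) (nrm d' : ℤ))
          * F [] d' * F [] (fun i => D i - d' i) := by
    apply Finset.sum_subset
    · intro d' hd'
      rw [Finset.mem_filter] at hd'
      obtain ⟨hpi, h2', h2''⟩ := hd'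
      have hd'0 : d' ≠ 0 := by
        intro h
        rw [h] at h2'
        have : nrm (0 : V3) = 0 := by simp [nrm]
        omega
      have hd''0 : (fun i => D i - d' i) ≠ (0 : V3) := by
        intro h
        rw [h] at h2''
        have : nrm (0 : V3) = 0 := by simp [nrm]
        omega
      refine Finset.mem_erase.mpr ⟨?_, Finset.mem_erase.mpr ⟨?_, ?_⟩⟩
      · intro h
        rw [h, hdiff2, nrm_single] at h2''
        omega
      · intro h
        rw [h, nrm_single] at h2'
        omega
      · rw [splitVec, Finset.mem_filter]
        exact ⟨hpi, hd'0, hd''0⟩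
    · intro d' hd' hnot
      rw [Finset.mem_erase, Finset.mem_erase, splitVec, Finset.mem_filter] at hd'
      obtain ⟨hne_d, hne_e, hpi, hd'0, hd''0⟩ := hd'
      have hle : ∀ i, d' i ≤ D i := by
        intro i
        have := Fintype.mem_piFinset.mp hpi i
        rw [Finset.mem_range] at this
        omega
      have hcase : ¬(2 ≤ nrm d' ∧ 2 ≤ nrm (fun i => D i - d' i)) := by
        intro h
        exact hnot (Finset.mem_filter.mpr ⟨hpi, h⟩)
      have h1' : 1 ≤ nrm d' := nrm_pos hd'0
      have h1'' : 1 ≤ nrm (fun i => D i - d' i) := nrm_pos hd''0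
      rcases not_and_or.mp hcase with h | h
      · -- nrm d' = 1, d' ≠ e_r, so d' r = 0
        push_neg at h
        have : d' r = 0 := hr0 d' (by omega) hne_e
        rw [this]
        push_cast
        ring
      · -- nrm d'' = 1
        push_neg at h
        have hd''1 : nrm (fun i => D i - d' i) = 1 := by omega
        have hd''ne : (fun i => D i - d' i) ≠ (Pi.single r 1 : V3) := by
          intro hh
          apply hne_d
          funext i
          have h1 := congrFun hh i
          have h2 := congrFun hdiff1 i
          have := hle i
          omega
        have hd''r : D r - d' r = 0 := hr0 _ hd''1 hd''ne
        have hsum := hnrm_split d' hle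
        have hnrmd' : nrm d' = nrm d := by omega
        rw [hd''r, hnrmd', binom_gt (by omega : (nrm d : ℤ) - 1 < (nrm d : ℤ))]
        push_cast
        ring
  rw [← hrest] at hkey
  linarith [hkey]
end
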